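/- Let n, m be coprime positive integers with m ≥ n > 1, and let C be the (n+m) × (n+m) circulant matrix over an algebraically closed field of characteristic 0 with associated polynomial f(x) = x^m + 1. Then rank(C) = n + m - 1 if n + m is even, and rank(C) = n + m if n + m is odd. -/
import Mathlib

private lemma negOnePow_congr {k : Type*} [Ring k] {a b : ℕ} (h : a % 2 = b % 2) :
    (-1 : k) ^ a = (-1 : k) ^ b := by
  rcases Nat.even_or_odd a with ha | ha
  · have hb : Even b := by rw [Nat.even_iff] at ha ⊢; omega
    rw [ha.neg_one_pow, hb.neg_one_pow]
  · have hb : Odd b := by rw [Nat.odd_iff] at ha ⊢; omega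
    rw [ha.neg_one_pow, hb.neg_one_pow]

private lemma ker_iter {k : Type*} [Field k] {r m : ℕ} [NeZero r] (v : ZMod r → k)
    (hv : ∀ p, v (p + (m : ZMod r)) = - v p) :
    ∀ (j : ℕ) (p : ZMod r), v (p + (j : ZMod r) * m) = (-1) ^ j * v p := by
  intro j
  induction j with
  | zero => intro p; simp
  | succ j ih =>
    intro p
    have h1 : p + ((j + 1 : ℕ) : ZMod r) * m = (p + m) + (j : ZMod r) * m := by
      push_cast; ring
    rw [h1, ih, hv, pow_succ]
    ring

private lemma rank_aux {k : Type*} [Field k] [CharZero k] (r m : ℕ) [NeZero r]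
    (hm : Nat.Coprime m r) (hm0 : (m : ZMod r) ≠ 0) (hr : 1 < r)
    (hpar : Even r → Odd m)
    (D : Matrix (ZMod r) (ZMod r) k)
    (hD : ∀ p q : ZMod r, D p q = if q = p ∨ q = p + (m : ZMod r) then 1 else 0) :
    D.rank = if Even r then r - 1 else r := by
  classical
  have hne : ∀ p : ZMod r, p ≠ p + (m : ZMod r) := by
    intro p hp
    exact hm0 (by simpa using (left_eq_add.mp hp))
  have hmv : ∀ v : ZMod r → k, D.mulVec v = fun p => v p + v (p + (m : ZMod r)) := by
    intro v
    funext p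
    have : D.mulVec v p = ∑ q : ZMod r, (if q = p ∨ q = p + (m : ZMod r) then 1 else 0) * v q := by
      simp [Matrix.mulVec, dotProduct, hD]
    rw [this]
    have h2 : ∀ q : ZMod r, (q = p ∨ q = p + (m : ZMod r)) ↔ q ∈ ({p, p + (m : ZMod r)} : Finset (ZMod r)) := by
      intro q; simp
    calc ∑ q : ZMod r, (if q = p ∨ q = p + (m : ZMod r) then 1 else 0) * v q
        = ∑ q ∈ ({p, p + (m : ZMod r)} : Finset (ZMod r)), v q := by
          rw [← Finset.sum_filter_add_sum_filter_not Finset.univ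
            (fun q => q ∈ ({p, p + (m : ZMod r)} : Finset (ZMod r)))]
          simp only [ite_mul, one_mul, zero_mul]
          rw [Finset.sum_congr rfl (fun q hq => by
            rw [if_pos]; rw [h2]; exact (Finset.mem_filter.mp hq).2),
            Finset.sum_congr rfl (fun q hq => (by
              rw [if_neg]; rw [h2]; exact (Finset.mem_filter.mp hq).2 : (if q = p ∨ q = p + (m : ZMod r) then v q else 0) = 0))]
          rw [Finset.sum_const_zero, add_zero]
          apply Finset.sum_congr _ (fun _ _ => rfl)
          ext q; simp
      _ = v p + v (p + (m : ZMod r)) := Finset.sum_pair (hne p)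
  have hker : ∀ v : ZMod r → k, v ∈ LinearMap.ker D.mulVecLin ↔
      ∀ p, v (p + (m : ZMod r)) = - v p := by
    intro v
    rw [LinearMap.mem_ker, Matrix.mulVecLin_apply, hmv, funext_iff]
    constructor
    · intro hv p; have := hv p; simp only [Pi.zero_apply] at this; linear_combination this
    · intro hv p; simp [hv p]
  have hrank : D.rank + Module.finrank k (LinearMap.ker D.mulVecLin) = r := by
    have := LinearMap.finrank_range_add_finrank_ker (D.mulVecLin)
    rwa [Module.finrank_fintype_fun_eq_card, ZMod.card] at this
  by_cases he : Even r
  · -- even case : kernel is span of w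
    have hmodd : Odd m := hpar he
    set u : (ZMod r)ˣ := ZMod.unitOfCoprime m hm with hu
    have hum : (u : ZMod r) = (m : ZMod r) := ZMod.coe_unitOfCoprime m hm
    set w : ZMod r → k := fun x => (-1 : k) ^ ((x * (u⁻¹ : (ZMod r)ˣ)).val) with hw
    have hwk : ∀ p, w (p + (m : ZMod r)) = - w p := by
      intro p
      have h3 : (p + (m : ZMod r)) * (u⁻¹ : (ZMod r)ˣ) = p * (u⁻¹ : (ZMod r)ˣ) + 1 := by
        rw [add_mul, ← hum, Units.mul_inv]
      rw [hw]
      simp only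
      rw [h3]
      set z := p * ((u⁻¹ : (ZMod r)ˣ) : ZMod r)
      have h4 : (z + 1).val = (z.val + 1) % r := by
        rw [ZMod.val_add, ZMod.val_one_eq_one_mod, Nat.mod_eq_of_lt hr]
      rw [h4]
      have h5 : (-1 : k) ^ ((z.val + 1) % r) = (-1 : k) ^ (z.val + 1) := by
        apply negOnePow_congr
        exact Nat.mod_mod_of_dvd _ he.two_dvd
      rw [h5, pow_succ]
      ring
    have hw0 : w ≠ 0 := by
      intro h0
      have : w 0 = 0 := by rw [h0]; rfl
      rw [hw] at this
      simp at this
    have hkspan : LinearMap.ker D.mulVecLin = Submodule.span k {w} := by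
      apply le_antisymm
      · intro v hv
        rw [hker] at hv
        rw [Submodule.mem_span_singleton]
        refine ⟨v 0, ?_⟩
        funext x
        have hx : x = (0 : ZMod r) + (((x * (u⁻¹ : (ZMod r)ˣ)).val : ℕ) : ZMod r) * m := by
          rw [ZMod.natCast_rightInverse _, zero_add, ← hum]
          calc x = x * ((u⁻¹ : (ZMod r)ˣ) * u) := by rw [Units.inv_mul]; ring
            _ = _ := by ring
        have := ker_iter v hv ((x * (u⁻¹ : (ZMod r)ˣ)).val) 0
        rw [← hx] at this
        rw [hw]
        simp only [Pi.smul_apply, smul_eq_mul]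
        rw [this]; ring
      · rw [Submodule.span_le, Set.singleton_subset_iff]
        exact (hker w).mpr hwk
    have hdim : Module.finrank k (LinearMap.ker D.mulVecLin) = 1 := by
      rw [hkspan]
      exact finrank_span_singleton hw0
    rw [hdim] at hrank
    simp only [he, if_true]
    omega
  · -- odd case : kernel trivial
    have hrodd : Odd r := Nat.odd_iff.mpr (by rw [Nat.even_iff] at he; omega)
    have hkbot : LinearMap.ker D.mulVecLin = ⊥ := by
      rw [eq_bot_iff]
      intro v hv
      rw [hker] at hv
      simp only [Submodule.mem_bot]
      funext p
      have := ker_iter v hv r p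
      rw [ZMod.natCast_self, zero_mul, add_zero, hrodd.neg_one_pow] at this
      have h6 : (2 : k) * v p = 0 := by linear_combination this
      have : v p = 0 := by
        rcases mul_eq_zero.mp h6 with h | h
        · exact absurd h two_ne_zero
        · exact h
      simpa using this
    rw [hkbot, finrank_bot] at hrank
    simp only [he, if_false]
    omega

/-- Let `n, m` be coprime positive integers with `m ≥ n > 1`, and let `C` be the
`(n+m) × (n+m)` circulant matrix over an algebraically closed field of characteristic 0
with associated polynomial `f(x) = x^m + 1`.  Then `rank C = n + m - 1` if `n + m` is
even and `rank C = n + m` if `n + m` is odd. -/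
theorem rank_circulant_xm_add_one (k : Type*) [Field k] [IsAlgClosed k] [CharZero k]
    (n m : ℕ) (h : Nat.Coprime n m) (hn : 1 < n) (hnm : n ≤ m)
    (C : Matrix (Fin (n + m)) (Fin (n + m)) k)
    (hC : ∀ p q : Fin (n + m), C p q =
      if ((q : ℕ) : ZMod (n + m)) = ((p : ℕ) : ZMod (n + m)) ∨
         ((q : ℕ) : ZMod (n + m)) = ((p : ℕ) : ZMod (n + m)) + (m : ZMod (n + m))
      then 1 else 0) :
    C.rank = if Even (n + m) then n + m - 1 else n + m := by
  classical
  have : NeZero (n + m) := ⟨by omega⟩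
  have hr1 : 1 < n + m := by omega
  let e : Fin (n + m) ≃ ZMod (n + m) :=
    { toFun := fun i => ((i : ℕ) : ZMod (n + m))
      invFun := fun z => ⟨z.val, z.val_lt⟩
      left_inv := fun i => by
        ext
        exact ZMod.val_cast_of_lt i.isLt
      right_inv := fun z => ZMod.natCast_rightInverse z }
  set D : Matrix (ZMod (n + m)) (ZMod (n + m)) k := C.submatrix e.symm e.symm with hDdef
  have hD : ∀ p q : ZMod (n + m), D p q = if q = p ∨ q = p + (m : ZMod (n + m)) then 1 else 0 := by
    intro p q
    have hp : (((e.symm p : Fin (n + m)) : ℕ) : ZMod (n + m)) = p := ZMod.natCast_rightInverse p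
    have hq : (((e.symm q : Fin (n + m)) : ℕ) : ZMod (n + m)) = q := ZMod.natCast_rightInverse q
    rw [hDdef]
    simp only [Matrix.submatrix_apply]
    rw [hC, hp, hq]
  have hm : Nat.Coprime m (n + m) := Nat.coprime_add_self_right.mpr h.symm
  have hm0 : (m : ZMod (n + m)) ≠ 0 := by
    rw [Ne, ZMod.natCast_eq_zero_iff]
    intro hd
    have := Nat.le_of_dvd (by omega) hd
    omega
  have hpar : Even (n + m) → Odd m := by
    intro he
    rw [Nat.odd_iff]
    by_contra ho
    have h2m : 2 ∣ m := by omega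
    have h2n : 2 ∣ n := by
      rcases he with ⟨c, hc⟩
      omega
    have h21 : 2 ∣ Nat.gcd n m := Nat.dvd_gcd h2n h2m
    rw [h] at h21
    omega
  have hrank := rank_aux (k := k) (n + m) m hm hm0 hr1 hpar D hD
  rw [← Matrix.rank_submatrix C e.symm e.symm]
  exact hrank
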